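/- Let I be a union of simple cycles in a metric complete graph, all passing through a common vertex v and pairwise sharing only v, covering all vertices. If H denotes the weight of the home-edges (edges of I incident to v), then deleting from each cycle the heavier of its two home-edges yields a spanning tree of weight at most w(I) − H/2. Hence w(I) − H/2 ≥ MST, the minimum spanning tree weight of the graph. -/

import Mathlib

/-- for an itinerary `I` (union of simple cycles of length ≥ 3 through a
common vertex `v`, pairwise sharing only `v`, covering all vertices), deleting from
each cycle the heavier of its two home-edges yields a spanning tree of weight at most
`w(I) − H/2`, where `H` is the total weight of the home-edges; hence `w(I) − H/2 ≥ MST`. -/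
theorem stmt_6 {V : Type*} [Fintype V] (w : V → V → ℝ)
    (hsymm : ∀ a b, w a b = w b a)
    (hnonneg : ∀ a b, 0 ≤ w a b)
    (htri : ∀ a b c, w a c ≤ w a b + w b c)
    (v : V) (m : ℕ) (c : Fin m → ℕ → V) (L : Fin m → ℕ)
    (hL : ∀ j, 3 ≤ L j)
    (hbase : ∀ j, c j 0 = v)
    (hinj : ∀ j, ∀ i i', i < L j → i' < L j → c j i = c j i' → i = i')
    (hshare : ∀ j j' : Fin m, j ≠ j' → ∀ i i',
      0 < i → i < L j → 0 < i' → i' < L j' → c j i ≠ c j' i')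
    (hcover : ∀ u : V, ∃ j : Fin m, ∃ i < L j, c j i = u) :
    ∃ E' : Finset (V × V),
      E'.card = Fintype.card V - 1 ∧
      (∀ e ∈ E', ∃ j : Fin m, ∃ i < L j,
        e.1 = c j i ∧ e.2 = c j ((i + 1) % L j)) ∧
      (SimpleGraph.fromRel (fun a b => (a, b) ∈ E' ∨ (b, a) ∈ E')).Connected ∧
      ∑ e ∈ E', w e.1 e.2 ≤
        (∑ j : Fin m, ∑ i ∈ Finset.range (L j), w (c j i) (c j ((i + 1) % L j)))
          - (∑ j : Fin m, (w v (c j 1) + w (c j (L j - 1)) v)) / 2 := by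
  classical
  set d : Fin m → ℕ := fun j => if w (c j (L j - 1)) v ≤ w v (c j 1) then 0 else L j - 1
    with hd
  have hdcases : ∀ j, d j = 0 ∨ d j = L j - 1 := by
    intro j; rw [hd]; dsimp only; split <;> simp
  have hdlt : ∀ j, d j < L j := by
    intro j; have := hL j; rcases hdcases j with h | h <;> omega
  set F : Fin m → ℕ → V × V := fun j i => (c j i, c j ((i + 1) % L j)) with hF
  have key : ∀ (j j' : Fin m) (i i' : ℕ), i < L j → i' < L j' →
      F j i = F j' i' → j = j' ∧ i = i' := by
    intro j j' i i' hi hi' h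
    rw [hF] at h
    simp only [Prod.mk.injEq] at h
    obtain ⟨h1, h2⟩ := h
    by_cases hjj : j = j'
    · subst hjj; exact ⟨rfl, hinj j i i' hi hi' h1⟩
    · exfalso
      rcases Nat.eq_zero_or_pos i with hi0 | hi0
      · subst hi0
        have hL3 := hL j; have hL3' := hL j'
        have hi'0 : i' = 0 := by
          refine hinj j' i' 0 hi' (by omega) ?_
          rw [← h1, hbase j, hbase j']
        subst hi'0
        have e1 : (0 + 1) % L j = 1 := Nat.mod_eq_of_lt (by omega)
        have e2 : (0 + 1) % L j' = 1 := Nat.mod_eq_of_lt (by omega)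
        rw [e1, e2] at h2
        exact hshare j j' hjj 1 1 one_pos (by omega) one_pos (by omega) h2
      · rcases Nat.eq_zero_or_pos i' with hi'0 | hi'0
        · subst hi'0
          have : i = 0 := hinj j i 0 hi (by have := hL j; omega)
            (by rw [h1, hbase j', hbase j])
          omega
        · exact hshare j j' hjj i i' hi0 hi hi'0 hi' h1
  set E' : Finset (V × V) :=
    Finset.univ.biUnion (fun j => ((Finset.range (L j)).erase (d j)).image (F j)) with hE'
  have hmem : ∀ e, e ∈ E' ↔ ∃ j : Fin m, ∃ i, i < L j ∧ i ≠ d j ∧ e = F j i := by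
    intro e
    rw [hE']
    simp only [Finset.mem_biUnion, Finset.mem_univ, true_and, Finset.mem_image,
      Finset.mem_erase, Finset.mem_range]
    constructor
    · rintro ⟨j, i, ⟨hne, hi⟩, he⟩; exact ⟨j, i, hi, hne, he.symm⟩
    · rintro ⟨j, i, hi, hne, he⟩; exact ⟨j, i, ⟨hne, hi⟩, he.symm⟩
  have hdisj : ∀ j ∈ (Finset.univ : Finset (Fin m)), ∀ j' ∈ (Finset.univ : Finset (Fin m)),
      j ≠ j' → Disjoint (((Finset.range (L j)).erase (d j)).image (F j))
        (((Finset.range (L j')).erase (d j')).image (F j')) := by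
    intro j _ j' _ hjj
    rw [Finset.disjoint_left]
    rintro e he he'
    simp only [Finset.mem_image, Finset.mem_erase, Finset.mem_range] at he he'
    obtain ⟨i, ⟨_, hi⟩, hei⟩ := he
    obtain ⟨i', ⟨_, hi'⟩, hei'⟩ := he'
    exact hjj (key j j' i i' hi hi' (hei.trans hei'.symm)).1
  have hinjim : ∀ j : Fin m, Set.InjOn (F j) ((Finset.range (L j)).erase (d j)) := by
    intro j a ha b hb hab
    simp only [Finset.coe_erase, Finset.coe_range, Set.mem_diff, Set.mem_Iio] at ha hb
    exact (key j j a b ha.1 hb.1 hab).2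
  -- vertex count
  set S : Finset V := Finset.univ.biUnion (fun j => ((Finset.range (L j)).erase 0).image (c j))
    with hS
  have hvS : v ∉ S := by
    rw [hS]
    simp only [Finset.mem_biUnion, Finset.mem_univ, true_and, Finset.mem_image,
      Finset.mem_erase, Finset.mem_range, not_exists, not_and]
    rintro j i ⟨hne, hi⟩ hv
    have := hL j
    exact hne (hinj j i 0 hi (by omega) (by rw [hv, hbase]))
  have huniv : (Finset.univ : Finset V) = insert v S := by
    apply Finset.Subset.antisymm
    · intro u _
      obtain ⟨j, i, hi, hu⟩ := hcover u
      rcases Nat.eq_zero_or_pos i with h0 | h0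
      · subst h0; rw [hbase] at hu; rw [← hu]; exact Finset.mem_insert_self _ _
      · apply Finset.mem_insert_of_mem
        rw [hS]
        simp only [Finset.mem_biUnion, Finset.mem_univ, true_and, Finset.mem_image,
          Finset.mem_erase, Finset.mem_range]
        exact ⟨j, i, ⟨by omega, hi⟩, hu⟩
    · intro u _; exact Finset.mem_univ u
  have hScard : S.card = ∑ j : Fin m, (L j - 1) := by
    rw [hS, Finset.card_biUnion]
    · refine Finset.sum_congr rfl fun j _ => ?_
      rw [Finset.card_image_of_injOn, Finset.card_erase_of_mem
        (Finset.mem_range.mpr (by have := hL j; omega)), Finset.card_range]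
      intro a ha b hb hab
      simp only [Finset.coe_erase, Finset.coe_range, Set.mem_diff, Set.mem_Iio] at ha hb
      exact hinj j a b ha.1 hb.1 hab
    · intro j _ j' _ hjj
      rw [Function.onFun, Finset.disjoint_left]
      rintro u hu hu'
      simp only [Finset.mem_image, Finset.mem_erase, Finset.mem_range] at hu hu'
      obtain ⟨i, ⟨hne, hi⟩, hui⟩ := hu
      obtain ⟨i', ⟨hne', hi'⟩, hui'⟩ := hu'
      exact hshare j j' hjj i i' (by omega) hi (by omega) hi' (hui.trans hui'.symm)
  have hVcard : Fintype.card V = 1 + ∑ j : Fin m, (L j - 1) := by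
    rw [← Finset.card_univ, huniv, Finset.card_insert_of_notMem hvS, hScard]
    omega
  have hEcard : E'.card = ∑ j : Fin m, (L j - 1) := by
    rw [hE', Finset.card_biUnion hdisj]
    refine Finset.sum_congr rfl fun j _ => ?_
    rw [Finset.card_image_of_injOn (hinjim j), Finset.card_erase_of_mem
      (Finset.mem_range.mpr (hdlt j)), Finset.card_range]
  refine ⟨E', by rw [hEcard, hVcard]; omega, ?_, ?_, ?_⟩
  · -- edges come from cycles
    intro e he
    rw [hmem] at he
    obtain ⟨j, i, hi, _, he⟩ := he
    exact ⟨j, i, hi, by rw [he, hF], by rw [he, hF]⟩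
  · -- connectivity
    set G := SimpleGraph.fromRel (fun a b => (a, b) ∈ E' ∨ (b, a) ∈ E') with hG
    have hadj : ∀ j i, i < L j → i ≠ d j → G.Adj (c j i) (c j ((i + 1) % L j)) := by
      intro j i hi hne
      have hL3 := hL j
      have h1 : (i + 1) % L j < L j := Nat.mod_lt _ (by omega)
      have hne2 : c j i ≠ c j ((i + 1) % L j) := by
        intro h
        have heq := hinj j i _ hi h1 h
        rcases Nat.lt_or_ge (i + 1) (L j) with h' | h'
        · rw [Nat.mod_eq_of_lt h'] at heq; omega
        · have hiL : i + 1 = L j := by omega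
          rw [hiL, Nat.mod_self] at heq
          omega
      rw [hG, SimpleGraph.fromRel_adj]
      refine ⟨hne2, Or.inl ?_⟩
      rw [hmem]
      exact Or.inl ⟨j, i, hi, hne, by rw [hF]⟩
    have hreach : ∀ j, ∀ i, i < L j → G.Reachable (c j i) v := by
      intro j
      have hL3 := hL j
      rcases hdcases j with hdj | hdj
      · -- deleted first edge; go forward to v
        have main : ∀ k, ∀ i, 0 < i → i < L j → L j - i ≤ k → G.Reachable (c j i) v := by
          intro k
          induction k with
          | zero => intro i _ hi hk; omega
          | succ k ih =>
            intro i h0 hi hk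
            have step := hadj j i hi (by omega)
            rcases Nat.lt_or_ge (i + 1) (L j) with h' | h'
            · rw [Nat.mod_eq_of_lt h'] at step
              exact step.reachable.trans (ih (i + 1) (by omega) h' (by omega))
            · have hiL : i + 1 = L j := by omega
              rw [hiL, Nat.mod_self, hbase] at step
              exact step.reachable
        intro i hi
        rcases Nat.eq_zero_or_pos i with h0 | h0
        · subst h0; rw [hbase]
        · exact main (L j) i h0 hi (by omega)
      · -- deleted last edge; go backward to v
        have main : ∀ i, i < L j → G.Reachable v (c j i) := by
          intro i
          induction i with
          | zero => intro _; rw [hbase]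
          | succ i ih =>
            intro hi
            have hi' : i < L j := by omega
            have step := hadj j i hi' (by omega)
            rw [Nat.mod_eq_of_lt hi] at step
            exact (ih hi').trans step.reachable
        intro i hi
        exact (main i hi).symm
    rw [SimpleGraph.connected_iff]
    refine ⟨?_, ⟨v⟩⟩
    intro a b
    obtain ⟨j, i, hi, ha⟩ := hcover a
    obtain ⟨j', i', hi', hb⟩ := hcover b
    rw [← ha, ← hb]
    exact (hreach j i hi).trans (hreach j' i' hi').symm
  · -- weight bound
    have hsum : ∑ e ∈ E', w e.1 e.2
        = ∑ j : Fin m, ∑ i ∈ (Finset.range (L j)).erase (d j), w (c j i) (c j ((i + 1) % L j)) := by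
      rw [hE', Finset.sum_biUnion hdisj]
      refine Finset.sum_congr rfl fun j _ => ?_
      rw [Finset.sum_image]
      intro a ha b hb hab
      exact (key j j a b (Finset.mem_range.mp (Finset.mem_of_mem_erase ha))
        (Finset.mem_range.mp (Finset.mem_of_mem_erase hb)) hab).2
    rw [hsum, Finset.sum_div, ← Finset.sum_sub_distrib]
    refine Finset.sum_le_sum fun j _ => ?_
    have hL3 := hL j
    rw [Finset.sum_erase_eq_sub (Finset.mem_range.mpr (hdlt j))]
    have hkey : (w v (c j 1) + w (c j (L j - 1)) v) / 2 ≤ w (c j (d j)) (c j ((d j + 1) % L j)) := by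
      rw [hd]
      dsimp only
      split
      · next h =>
        have e1 : (0 + 1) % L j = 1 := Nat.mod_eq_of_lt (by omega)
        rw [e1, hbase]
        linarith
      · next h =>
        have e1 : (L j - 1 + 1) % L j = 0 := by
          have : L j - 1 + 1 = L j := by omega
          rw [this, Nat.mod_self]
        rw [e1, hbase]
        linarith
    linarith
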